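/- Let p be a real polynomial, κ > 0, and suppose on an interval (a,b) we have p ≠ 0, p' ≠ 0, p'' ≠ 0. Define F_κ[p] = p·p'' − κ(p')² and F̂_κ[p] = p'·p''' − (2 − 1/κ)(p'')². Then the identity κ·(p'/(p'')²)·F̂_κ[p](x) = (F_κ[p]/p'')'(x) holds for all x ∈ (a,b); in particular, if F_κ[p](ζ) = 0 at some ζ ∈ (a,b), then F̂_κ[p](ζ) = (p''(ζ)/(κ p'(ζ)))·F_κ[p]'(ζ). -/

import Mathlib

open Polynomial

/-- **Key identity (A.5)/(A.10).** Let `p` be a real polynomial, `κ > 0`, and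
suppose `p`, `p'`, `p''` have no zeroes on `(a, b)`. With
`F_κ[p] = p·p'' − κ(p')²` and `F̂_κ[p] = p'·p''' − (2 − 1/κ)(p'')²`, the identity
`κ·(p'(x)/(p''(x))²)·F̂_κ[p](x) = (F_κ[p]/p'')'(x)` holds on `(a, b)`; in
particular, if `F_κ[p](ζ) = 0` for some `ζ ∈ (a, b)`, then
`F̂_κ[p](ζ) = (p''(ζ)/(κ·p'(ζ)))·F_κ[p]'(ζ)`. -/
theorem key_identity_F_hat (p : ℝ[X]) (κ : ℝ) (hκ : 0 < κ) (a b : ℝ)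
    (hp : ∀ x ∈ Set.Ioo a b, p.eval x ≠ 0)
    (hp' : ∀ x ∈ Set.Ioo a b, (derivative p).eval x ≠ 0)
    (hp'' : ∀ x ∈ Set.Ioo a b, (derivative (derivative p)).eval x ≠ 0) :
    (∀ x ∈ Set.Ioo a b,
      κ * ((derivative p).eval x / ((derivative (derivative p)).eval x) ^ 2)
          * ((derivative p) * (derivative (derivative (derivative p)))
              - C (2 - 1 / κ) * (derivative (derivative p)) ^ 2).eval x
        = deriv (fun y =>
            (p * derivative (derivative p) - C κ * (derivative p) ^ 2).eval y
              / (derivative (derivative p)).eval y) x) ∧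
    (∀ ζ ∈ Set.Ioo a b,
      (p * derivative (derivative p) - C κ * (derivative p) ^ 2).eval ζ = 0 →
      ((derivative p) * (derivative (derivative (derivative p)))
          - C (2 - 1 / κ) * (derivative (derivative p)) ^ 2).eval ζ
        = (derivative (derivative p)).eval ζ / (κ * (derivative p).eval ζ)
            * (derivative
                (p * derivative (derivative p) - C κ * (derivative p) ^ 2)).eval ζ) := by
  have hκ0 : κ ≠ 0 := ne_of_gt hκ
  constructor
  · intro x hx
    have hqx := hp'' x hx
    have hF := (p * derivative (derivative p) - C κ * (derivative p) ^ 2).hasDerivAt x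
    have hq := (derivative (derivative p)).hasDerivAt x
    have hD : HasDerivAt (fun y =>
        (p * derivative (derivative p) - C κ * (derivative p) ^ 2).eval y
          / (derivative (derivative p)).eval y) _ x := hF.div hq hqx
    rw [hD.deriv]
    simp only [derivative_mul, derivative_sub, derivative_pow, derivative_C, eval_add,
      eval_mul, eval_sub, eval_pow, eval_C, eval_natCast, zero_mul, eval_zero,
      Nat.cast_ofNat, pow_one]
    field_simp
    ring
  · intro ζ hζ h0
    have hpζ := hp' ζ hζ
    simp only [derivative_mul, derivative_sub, derivative_pow, derivative_C, eval_add,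
      eval_mul, eval_sub, eval_pow, eval_C, eval_natCast, zero_mul, eval_zero,
      Nat.cast_ofNat, pow_one] at h0 ⊢
    field_simp
    linear_combination (-eval ζ (derivative (derivative (derivative p)))) * h0
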